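/- If G is a graph with exactly k triangles, then the exchange number of G with respect to Δ-convexity is at most k + 2. -/

import Mathlib

variable {V : Type*}

/-- `S` is Δ-convex: no vertex outside `S` is adjacent to two adjacent vertices of `S`. -/
def DeltaConvex (G : SimpleGraph V) (S : Set V) : Prop :=
  ∀ ⦃w u v : V⦄, u ∈ S → v ∈ S → G.Adj u v → G.Adj w u → G.Adj w v → w ∈ S

/-- The Δ-convex hull of `S`: the smallest Δ-convex set containing `S`. -/
def deltaHull (G : SimpleGraph V) (S : Set V) : Set V :=
  ⋂₀ {T : Set V | S ⊆ T ∧ DeltaConvex G T}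

namespace StmtAux

variable (G : SimpleGraph V)

inductive Deriv (T : Set V) : V → Prop
  | base {x : V} : x ∈ T → Deriv T x
  | step {u v w : V} : Deriv T u → Deriv T v → G.Adj u v → G.Adj w u → G.Adj w v →
      Deriv T w

lemma subset_hull (T : Set V) : T ⊆ deltaHull G T := by
  intro x hx
  intro T' hT'
  exact hT'.1 hx

lemma hull_mono {A B : Set V} (h : A ⊆ B) : deltaHull G A ⊆ deltaHull G B := by
  intro x hx T' hT'
  exact hx T' ⟨h.trans hT'.1, hT'.2⟩

lemma hull_eq (T : Set V) : deltaHull G T = {x | Deriv G T x} := by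
  apply Set.Subset.antisymm
  · exact Set.sInter_subset_of_mem ⟨fun x hx => Deriv.base hx,
      fun w u v hu hv h1 h2 h3 => Deriv.step hu hv h1 h2 h3⟩
  · intro x hx
    simp only [deltaHull, Set.mem_sInter, Set.mem_setOf_eq]
    intro T' hT'
    induction hx with
    | base h => exact hT'.1 h
    | step hu hv h1 h2 h3 ihu ihv => exact hT'.2 ihu ihv h1 h2 h3

def good : Set V → List (V × V × V) → Prop
  | _, [] => True
  | X, t :: L => t.2.1 ∈ X ∧ t.2.2 ∈ X ∧ G.Adj t.2.1 t.2.2 ∧ G.Adj t.1 t.2.1 ∧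
      G.Adj t.1 t.2.2 ∧ good (insert t.1 X) L

def outs (L : List (V × V × V)) : List V := L.map Prod.fst

def inps (L : List (V × V × V)) : List V := L.map (·.2.1) ++ L.map (·.2.2)

def finalSet : Set V → List (V × V × V) → Set V
  | X, [] => X
  | X, t :: L => finalSet (insert t.1 X) L

variable {G}

lemma mem_inps_iff {x : V} {L : List (V × V × V)} :
    x ∈ inps L ↔ ∃ t ∈ L, x = t.2.1 ∨ x = t.2.2 := by
  simp only [inps, List.mem_append, List.mem_map]
  aesop

lemma outs_append {A B : List (V × V × V)} : outs (A ++ B) = outs A ++ outs B :=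
  List.map_append

lemma outs_cons {t : V × V × V} {L : List (V × V × V)} :
    outs (t :: L) = t.1 :: outs L := rfl

lemma mem_finalSet {x : V} : ∀ {L : List (V × V × V)} {X : Set V},
    x ∈ finalSet X L ↔ x ∈ X ∨ x ∈ outs L
  | [], X => by simp [finalSet, outs]
  | t :: L, X => by
    rw [finalSet, mem_finalSet]
    simp only [Set.mem_insert_iff, outs, List.map_cons, List.mem_cons]
    tauto

lemma good_subset : ∀ {L : List (V × V × V)} {X Y : Set V}, good G X L →
    (∀ x ∈ inps L, x ∈ X → x ∈ Y) → good G Y L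
  | [], _, _, _, _ => trivial
  | t :: L, X, Y, ⟨h1, h2, h3, h4, h5, h6⟩, hs => by
    have ht1 : t.2.1 ∈ inps (t :: L) := mem_inps_iff.2 ⟨t, List.mem_cons_self, Or.inl rfl⟩
    have ht2 : t.2.2 ∈ inps (t :: L) := mem_inps_iff.2 ⟨t, List.mem_cons_self, Or.inr rfl⟩
    refine ⟨hs _ ht1 h1, hs _ ht2 h2, h3, h4, h5, good_subset h6 ?_⟩
    intro x hx hxi
    rcases hxi with h | h
    · exact Or.inl h
    · refine Or.inr (hs x ?_ h)
      rcases mem_inps_iff.1 hx with ⟨s, hsL, hd⟩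
      exact mem_inps_iff.2 ⟨s, List.mem_cons_of_mem _ hsL, hd⟩

lemma good_mono {L : List (V × V × V)} {X Y : Set V} (hXY : X ⊆ Y) (h : good G X L) :
    good G Y L :=
  good_subset h (fun x _ hx => hXY hx)

lemma finalSet_append : ∀ {L₁ L₂ : List (V × V × V)} {X : Set V},
    finalSet X (L₁ ++ L₂) = finalSet (finalSet X L₁) L₂
  | [], _, _ => rfl
  | t :: L₁, L₂, X => by
    rw [List.cons_append, finalSet, finalSet, finalSet_append]

lemma good_append : ∀ {L₁ L₂ : List (V × V × V)} {X : Set V},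
    good G X (L₁ ++ L₂) ↔ good G X L₁ ∧ good G (finalSet X L₁) L₂
  | [], L₂, X => by simp [good, finalSet]
  | t :: L₁, L₂, X => by
    rw [List.cons_append, good, good, finalSet, good_append]
    tauto

lemma deriv_to_list {X : Set V} {q : V} (h : Deriv G X q) :
    ∃ L, good G X L ∧ q ∈ finalSet X L := by
  induction h with
  | base hx => exact ⟨[], trivial, hx⟩
  | @step u v w hu hv h1 h2 h3 ihu ihv =>
    obtain ⟨Lu, hLu, hqu⟩ := ihu
    obtain ⟨Lv, hLv, hqv⟩ := ihv
    refine ⟨Lu ++ Lv ++ [(w, u, v)], ?_, ?_⟩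
    · rw [good_append, good_append]
      refine ⟨⟨hLu, good_mono (fun x hx => mem_finalSet.2 (Or.inl hx)) hLv⟩, ?_⟩
      have hu' : u ∈ finalSet X (Lu ++ Lv) := by
        rw [finalSet_append, mem_finalSet]
        exact Or.inl hqu
      have hv' : v ∈ finalSet X (Lu ++ Lv) := by
        rw [finalSet_append, mem_finalSet]
        rcases mem_finalSet.1 hqv with h | h
        · exact Or.inl (mem_finalSet.2 (Or.inl h))
        · rw [mem_finalSet]
          exact Or.inr h
      exact ⟨hu', hv', h1, h2, h3, trivial⟩
    · rw [finalSet_append, mem_finalSet]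
      exact Or.inr (by simp [outs])

lemma deriv_insert {X : Set V} {w x : V} (h : Deriv G (insert w X) x)
    (hw : Deriv G X w) : Deriv G X x := by
  induction h with
  | base hx =>
    rcases hx with h | h
    · exact h ▸ hw
    · exact Deriv.base h
  | step hu hv h1 h2 h3 ihu ihv => exact Deriv.step ihu ihv h1 h2 h3

lemma good_deriv : ∀ {L : List (V × V × V)} {X : Set V}, good G X L →
    ∀ x ∈ finalSet X L, Deriv G X x
  | [], X, _, x, hx => Deriv.base hx
  | t :: L, X, ⟨h1, h2, h3, h4, h5, h6⟩, x, hx => by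
    have hw : Deriv G X t.1 := Deriv.step (Deriv.base h1) (Deriv.base h2) h3 h4 h5
    exact deriv_insert (good_deriv h6 x hx) hw

lemma list_mem_hull {L : List (V × V × V)} {X : Set V} (h : good G X L) {x : V}
    (hx : x ∈ finalSet X L) : x ∈ deltaHull G X := by
  rw [hull_eq]
  exact good_deriv h x hx

lemma good_decomp {L : List (V × V × V)} {X : Set V} (h : good G X L) (i : ℕ)
    (hi : i < L.length) :
    good G X (L.take i) ∧ L[i].2.1 ∈ finalSet X (L.take i) ∧
    L[i].2.2 ∈ finalSet X (L.take i) ∧ G.Adj L[i].2.1 L[i].2.2 ∧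
    G.Adj L[i].1 L[i].2.1 ∧ G.Adj L[i].1 L[i].2.2 ∧
    good G (insert L[i].1 (finalSet X (L.take i))) (L.drop (i + 1)) := by
  have hsplit : L = L.take i ++ L[i] :: L.drop (i + 1) := by
    rw [← List.drop_eq_getElem_cons hi, List.take_append_drop]
  rw [hsplit, good_append, good] at h
  exact ⟨h.1, h.2.1, h.2.2.1, h.2.2.2.1, h.2.2.2.2.1, h.2.2.2.2.2.1, h.2.2.2.2.2.2⟩

lemma finalSet_take_mono {L : List (V × V × V)} {X : Set V} {i j : ℕ} (hij : i ≤ j) :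
    finalSet X (L.take i) ⊆ finalSet X (L.take j) := by
  have hj : L.take j = L.take i ++ (L.drop i).take (j - i) := by
    rw [← List.take_add]
    congr 1
    omega
  intro x hx
  rw [hj, finalSet_append, mem_finalSet]
  exact Or.inl hx

lemma key [Fintype V] [DecidableEq V] [DecidableRel G.Adj] (T : Finset V) (q : V)
    (hq : q ∈ deltaHull G ↑T) (hqT : q ∉ T)
    (hmin : ∀ a ∈ T, q ∉ deltaHull G ↑(T.erase a)) :
    T.card ≤ (G.cliqueFinset 3).card + 1 := by
  classical
  have hqT' : q ∉ (↑T : Set V) := by simpa using hqT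
  have hex : ∃ m : ℕ, ∃ L : List (V × V × V),
      good G ↑T L ∧ q ∈ outs L ∧ L.length = m := by
    rw [hull_eq] at hq
    obtain ⟨L, hL, hqL⟩ := deriv_to_list hq
    rcases mem_finalSet.1 hqL with h | h
    · exact absurd h hqT'
    · exact ⟨L.length, L, hL, h, rfl⟩
  obtain ⟨L, hLgood, hqouts, hlen⟩ := Nat.find_spec hex
  -- Fact A : no output is already available before its step
  have factA : ∀ i (hi : i < L.length), L[i].1 ∉ finalSet ↑T (L.take i) := by
    intro i hi hmem
    obtain ⟨hg1, _, _, _, _, _, hg7⟩ := good_decomp hLgood i hi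
    have hg7' : good G (finalSet ↑T (L.take i)) (L.drop (i + 1)) := by
      rwa [Set.insert_eq_self.2 hmem] at hg7
    have hgood' : good G ↑T (L.take i ++ L.drop (i + 1)) :=
      good_append.2 ⟨hg1, hg7'⟩
    have hsplit : L = L.take i ++ L[i] :: L.drop (i + 1) := by
      rw [← List.drop_eq_getElem_cons hi, List.take_append_drop]
    have hqouts' : q ∈ outs (L.take i ++ L.drop (i + 1)) := by
      rw [hsplit] at hqouts
      rw [outs_append, outs_cons] at hqouts
      rw [outs_append, List.mem_append]
      rcases List.mem_append.1 hqouts with h | h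
      · exact Or.inl h
      · rcases List.mem_cons.1 h with h | h
        · rcases mem_finalSet.1 (h ▸ hmem) with h' | h'
          · exact absurd h' hqT'
          · exact Or.inl h'
        · exact Or.inr h
    have hshort : (L.take i ++ L.drop (i + 1)).length < Nat.find hex := by
      rw [← hlen]
      simp only [List.length_append, List.length_take, List.length_drop]
      omega
    exact Nat.find_min hex hshort ⟨_, hgood', hqouts', rfl⟩
  have factB : ∀ i (hi : i < L.length), L[i].1 = q ∨ L[i].1 ∈ inps (L.drop (i + 1)) := by
    intro i hi
    by_contra hcon
    push_neg at hcon
    obtain ⟨hne, hni⟩ := hcon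
    obtain ⟨hg1, _, _, _, _, _, hg7⟩ := good_decomp hLgood i hi
    have hg7' : good G (finalSet ↑T (L.take i)) (L.drop (i + 1)) := by
      refine good_subset hg7 ?_
      intro x hx hxi
      rcases Set.mem_insert_iff.1 hxi with h | h
      · exact absurd (h ▸ hx) hni
      · exact h
    have hgood' : good G ↑T (L.take i ++ L.drop (i + 1)) := good_append.2 ⟨hg1, hg7'⟩
    have hsplit : L = L.take i ++ L[i] :: L.drop (i + 1) := by
      rw [← List.drop_eq_getElem_cons hi, List.take_append_drop]
    have hqouts' : q ∈ outs (L.take i ++ L.drop (i + 1)) := by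
      rw [hsplit] at hqouts
      rw [outs_append, outs_cons] at hqouts
      rw [outs_append, List.mem_append]
      rcases List.mem_append.1 hqouts with h | h
      · exact Or.inl h
      · rcases List.mem_cons.1 h with h | h
        · exact absurd h.symm hne
        · exact Or.inr h
    have hshort : (L.take i ++ L.drop (i + 1)).length < Nat.find hex := by
      rw [← hlen]
      simp only [List.length_append, List.length_take, List.length_drop]
      omega
    exact Nat.find_min hex hshort ⟨_, hgood', hqouts', rfl⟩
  -- every output of an earlier step is available later
  have memout : ∀ i (hi : i < L.length) (j : ℕ), i < j →
      L[i].1 ∈ finalSet ↑T (L.take j) := by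
    intro i hi j hij
    apply finalSet_take_mono (show i + 1 ≤ j by omega)
    have hc : L.take (i + 1) = L.take i ++ [L[i]] := by
      rw [← List.take_concat_get hi, List.concat_eq_append]
    rw [hc, finalSet_append]
    exact mem_finalSet.2 (Or.inr (by simp [outs]))
  have houtT : ∀ i (hi : i < L.length), L[i].1 ∉ (↑T : Set V) := by
    intro i hi hmem
    exact factA i hi (mem_finalSet.2 (Or.inl hmem))
  have houtnd : (outs L).Nodup := by
    rw [List.Nodup, List.pairwise_iff_getElem]
    intro i j hi hj hij
    have hi' : i < L.length := by simpa [outs] using hi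
    have hj' : j < L.length := by simpa [outs] using hj
    simp only [outs, List.getElem_map]
    intro heq
    exact factA j hj' (heq ▸ memout i hi' j hij)
  have htri : ∀ i (hi : i < L.length),
      ({L[i].1, L[i].2.1, L[i].2.2} : Finset V) ∈ G.cliqueFinset 3 := by
    intro i hi
    obtain ⟨_, _, _, h3, h4, h5, _⟩ := good_decomp hLgood i hi
    rw [SimpleGraph.mem_cliqueFinset_iff, SimpleGraph.is3Clique_triple_iff]
    exact ⟨h4, h5, h3⟩
  have htnd : (L.map (fun t => ({t.1, t.2.1, t.2.2} : Finset V))).Nodup := by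
    rw [List.Nodup, List.pairwise_iff_getElem]
    intro i j hi hj hij
    have hi' : i < L.length := by simpa using hi
    have hj' : j < L.length := by simpa using hj
    simp only [List.getElem_map]
    intro heq
    obtain ⟨_, hu, hv, _, _, _, _⟩ := good_decomp hLgood i hi'
    have hj1 : L[j].1 ∈ ({L[i].1, L[i].2.1, L[i].2.2} : Finset V) := by
      rw [heq]; exact Finset.mem_insert_self _ _
    have hfin : L[j].1 ∈ finalSet ↑T (L.take j) := by
      rcases Finset.mem_insert.1 hj1 with h | h
      · rw [h]; exact memout i hi' j hij
      · rcases Finset.mem_insert.1 h with h | h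
        · rw [h]; exact finalSet_take_mono (le_of_lt hij) hu
        · rw [Finset.mem_singleton.1 h]; exact finalSet_take_mono (le_of_lt hij) hv
    exact factA j hj' hfin
  have hmk : L.length ≤ (G.cliqueFinset 3).card := by
    have h1 : (L.map (fun t => ({t.1, t.2.1, t.2.2} : Finset V))).toFinset.card
        = L.length := by
      rw [List.toFinset_card_of_nodup htnd, List.length_map]
    have h2 : (L.map (fun t => ({t.1, t.2.1, t.2.2} : Finset V))).toFinset
        ⊆ G.cliqueFinset 3 := by
      intro x hx
      rw [List.mem_toFinset, List.mem_map] at hx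
      obtain ⟨t, htL, rfl⟩ := hx
      obtain ⟨i, hi, rfl⟩ := List.mem_iff_getElem.1 htL
      exact htri i hi
    rw [← h1]
    exact Finset.card_le_card h2
  have hT_inps : ∀ a ∈ T, a ∈ inps L := by
    intro a haT
    by_contra hni
    have hgood' : good G ↑(T.erase a) L := by
      refine good_subset hLgood ?_
      intro x hx hxT
      have hxa : x ≠ a := fun h => hni (h ▸ hx)
      exact Finset.mem_coe.2 (Finset.mem_erase.2 ⟨hxa, Finset.mem_coe.1 hxT⟩)
    exact hmin a haT (list_mem_hull hgood' (mem_finalSet.2 (Or.inr hqouts)))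
  have hWcard : (outs L).toFinset.card = L.length := by
    rw [List.toFinset_card_of_nodup houtnd, outs, List.length_map]
  have hqW : q ∈ (outs L).toFinset := List.mem_toFinset.2 hqouts
  have hsub : T ∪ ((outs L).toFinset.erase q) ⊆ (inps L).toFinset := by
    intro x hx
    rcases Finset.mem_union.1 hx with h | h
    · exact List.mem_toFinset.2 (hT_inps x h)
    · obtain ⟨hxq, hxW⟩ := Finset.mem_erase.1 h
      rw [List.mem_toFinset] at hxW ⊢
      obtain ⟨i, hi, hLi⟩ := List.mem_iff_getElem.1 hxW
      have hi' : i < L.length := by simpa [outs] using hi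
      have hLi' : L[i].1 = x := by simpa [outs] using hLi
      rcases factB i hi' with h' | h'
      · exact absurd (hLi' ▸ h') hxq
      · rw [← hLi']
        rcases mem_inps_iff.1 h' with ⟨t, htd, hd⟩
        exact mem_inps_iff.2 ⟨t, List.drop_subset _ _ htd, hd⟩
  have hdisj : Disjoint T ((outs L).toFinset.erase q) := by
    rw [Finset.disjoint_left]
    intro x hxT hxE
    have hxW := (Finset.mem_erase.1 hxE).2
    rw [List.mem_toFinset] at hxW
    obtain ⟨i, hi, hLi⟩ := List.mem_iff_getElem.1 hxW
    have hi' : i < L.length := by simpa [outs] using hi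
    have hLi' : L[i].1 = x := by simpa [outs] using hLi
    exact houtT i hi' (by rw [hLi']; exact Finset.mem_coe.2 hxT)
  have hcard : T.card + ((outs L).toFinset.erase q).card ≤ L.length + L.length := by
    calc T.card + ((outs L).toFinset.erase q).card
        = (T ∪ (outs L).toFinset.erase q).card :=
          (Finset.card_union_of_disjoint hdisj).symm
      _ ≤ (inps L).toFinset.card := Finset.card_le_card hsub
      _ ≤ (inps L).length := List.toFinset_card_le _
      _ = L.length + L.length := by simp [inps]
  have hE : ((outs L).toFinset.erase q).card = L.length - 1 := by
    rw [Finset.card_erase_of_mem hqW, hWcard]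
  have hm1 : 1 ≤ L.length := by
    rcases List.mem_iff_getElem.1 hqouts with ⟨i, hi, _⟩
    have : i < L.length := by simpa [outs] using hi
    omega
  omega


end StmtAux

/-- `S` is exchange independent for Δ-convexity. -/
def EIndep [DecidableEq V] (G : SimpleGraph V) (S : Finset V) : Prop :=
  S.card = 1 ∨ ∃ p ∈ S, ∃ q ∈ deltaHull G ↑(S.erase p),
    ∀ a ∈ S.erase p, q ∉ deltaHull G ↑(S.erase a)

/-- The exchange number of `G` for Δ-convexity. -/
noncomputable def deltaExchangeNumber [DecidableEq V] [Fintype V]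
    (G : SimpleGraph V) : ℕ :=
  sSup {n : ℕ | ∃ S : Finset V, EIndep G S ∧ S.card = n}

theorem stmt_17 [Fintype V] [DecidableEq V] (G : SimpleGraph V)
    [DecidableRel G.Adj] (k : ℕ) (hk : (G.cliqueFinset 3).card = k) :
    deltaExchangeNumber G ≤ k + 2 := by
  apply csSup_le'
  rintro n ⟨S, hS, rfl⟩
  rcases hS with h1 | ⟨p, hp, q, hq, h⟩
  · omega
  by_cases hc : S.card ≤ 2
  · omega
  push_neg at hc
  have hqnot : q ∉ S.erase p := by
    intro hqe
    have hcard : 1 < (S.erase p).card := by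
      rw [Finset.card_erase_of_mem hp]; omega
    obtain ⟨a, haS, haq⟩ := Finset.exists_mem_ne hcard q
    apply h a haS
    apply StmtAux.subset_hull
    exact Finset.mem_coe.2
      (Finset.mem_erase.2 ⟨(Ne.symm haq), (Finset.mem_erase.1 hqe).2⟩)
  have hmin : ∀ a ∈ S.erase p, q ∉ deltaHull G ↑((S.erase p).erase a) := by
    intro a ha hq'
    refine h a ha (StmtAux.hull_mono G ?_ hq')
    exact_mod_cast Finset.coe_subset.2 (Finset.erase_subset_erase a (Finset.erase_subset p S))
  have hkey := StmtAux.key (G := G) (S.erase p) q hq hqnot hmin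
  rw [hk] at hkey
  have hc' : (S.erase p).card = S.card - 1 := Finset.card_erase_of_mem hp
  omega
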